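/- arXiv:math/0205089 — 3 statements merged into one kernel-verified Lean document; each statement's English description precedes it below -/
import Mathlib

section
/- The operation ⊙ on Θ is ℚ-bilinear, commutative, and associative: for all f, g, h ∈ Θ and c ∈ ℚ one has (c·f + g) ⊙ h = c·(f ⊙ h) + g ⊙ h, f ⊙ g = g ⊙ f, and (f ⊙ g) ⊙ h = f ⊙ (g ⊙ h). -/
variable {σ : Type*}

/-- Total degree of a monomial. -/
def monDeg (d : σ →₀ ℕ) : ℕ := d.sum fun _ n => n

/-- `Θ`: series whose coefficients vanish in degrees not divisible by `N`. -/
def InTheta (N : ℕ) (f : MvPowerSeries σ ℚ) : Prop :=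
  ∀ d : σ →₀ ℕ, ¬ (N ∣ monDeg d) → MvPowerSeries.coeff d f = 0

/-- `f^(k)`: homogeneous component of total degree `N * k`. -/
noncomputable def homComp (N : ℕ) (f : MvPowerSeries σ ℚ) (k : ℕ) : MvPowerSeries σ ℚ :=
  fun d => if monDeg d = N * k then MvPowerSeries.coeff d f else 0

/-- The operation `⊙`: `f ⊙ g = Σ_{k,ℓ} C(k+ℓ,k) f^(k) g^(ℓ)`, defined coefficientwise
(at a monomial of total degree `m`, only indices `k, ℓ ≤ m` can contribute, for `N ≥ 1`). -/
noncomputable def odot (N : ℕ) (f g : MvPowerSeries σ ℚ) : MvPowerSeries σ ℚ :=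
  fun d => ∑ k ∈ Finset.range (monDeg d + 1), ∑ l ∈ Finset.range (monDeg d + 1),
    ((k + l).choose k : ℚ) * MvPowerSeries.coeff d (homComp N f k * homComp N g l)

/-- The `E`-transform: `E f = Σ_k (q^k / k!) f^(k)`. -/
noncomputable def Etrans (N : ℕ) (f : MvPowerSeries σ ℚ) :
    PowerSeries (MvPowerSeries σ ℚ) :=
  PowerSeries.mk fun k => (k.factorial : ℚ)⁻¹ • homComp N f k

/-- `exp(q·u) = Σ_k (q^k / k!) u^k`. -/
noncomputable def expQ (u : MvPowerSeries σ ℚ) : PowerSeries (MvPowerSeries σ ℚ) :=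
  PowerSeries.mk fun k => (k.factorial : ℚ)⁻¹ • u ^ k

/-- A homogeneous polynomial of degree `N`: finitely many nonzero coefficients,
all in total degree exactly `N`. -/
def IsHomogDeg (N : ℕ) (a : MvPowerSeries σ ℚ) : Prop :=
  {d : σ →₀ ℕ | MvPowerSeries.coeff d a ≠ 0}.Finite ∧
    ∀ d : σ →₀ ℕ, MvPowerSeries.coeff d a ≠ 0 → monDeg d = N

/-- Iterated `⊙`-product of a nonempty list. -/
noncomputable def odotList (N : ℕ) : List (MvPowerSeries σ ℚ) → MvPowerSeries σ ℚ
  | [] => 1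
  | [f] => f
  | f :: g :: rest => odot N f (odotList N (g :: rest))

/- ### Auxiliary lemmas -/

lemma monDeg_add (d e : σ →₀ ℕ) : monDeg (d + e) = monDeg d + monDeg e := by
  simp [monDeg, Finsupp.sum_add_index']

lemma coeff_homComp (N : ℕ) (f : MvPowerSeries σ ℚ) (k : ℕ) (d : σ →₀ ℕ) :
    MvPowerSeries.coeff d (homComp N f k)
      = if monDeg d = N * k then MvPowerSeries.coeff d f else 0 := rfl

lemma coeff_odot (N : ℕ) (f g : MvPowerSeries σ ℚ) (d : σ →₀ ℕ) :
    MvPowerSeries.coeff d (odot N f g)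
      = ∑ k ∈ Finset.range (monDeg d + 1), ∑ l ∈ Finset.range (monDeg d + 1),
          ((k + l).choose k : ℚ) * MvPowerSeries.coeff d (homComp N f k * homComp N g l) := rfl

/-- Support concentrated in total degree `m`. -/
def HomSupp (m : ℕ) (a : MvPowerSeries σ ℚ) : Prop :=
  ∀ d : σ →₀ ℕ, monDeg d ≠ m → MvPowerSeries.coeff d a = 0

lemma homSupp_homComp (N : ℕ) (f : MvPowerSeries σ ℚ) (k : ℕ) :
    HomSupp (N * k) (homComp N f k) := fun _ hd => if_neg hd

lemma HomSupp.mul {m m' : ℕ} {a b : MvPowerSeries σ ℚ} (ha : HomSupp m a) (hb : HomSupp m' b) :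
    HomSupp (m + m') (a * b) := by
  classical
  intro d hd
  rw [MvPowerSeries.coeff_mul]
  refine Finset.sum_eq_zero fun p hp => ?_
  rw [Finset.HasAntidiagonal.mem_antidiagonal] at hp
  by_cases h1 : monDeg p.1 = m
  · rw [hb p.2 (fun h2 => hd (by rw [← hp, monDeg_add, h1, h2])), mul_zero]
  · rw [ha p.1 h1, zero_mul]

lemma homSupp_prodComp (N : ℕ) (f g : MvPowerSeries σ ℚ) (k l : ℕ) :
    HomSupp (N * (k + l)) (homComp N f k * homComp N g l) := by
  rw [mul_add]
  exact (homSupp_homComp N f k).mul (homSupp_homComp N g l)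

lemma inTheta_odot (N : ℕ) (f g : MvPowerSeries σ ℚ) : InTheta N (odot N f g) := by
  intro d hd
  rw [coeff_odot]
  refine Finset.sum_eq_zero fun k _ => Finset.sum_eq_zero fun l _ => ?_
  rw [homSupp_prodComp N f g k l d (fun hh => hd (by rw [hh]; exact dvd_mul_right N (k + l))),
    mul_zero]

/-- The homogeneous components of `odot`. -/
lemma homComp_odot (N : ℕ) (hN : 1 ≤ N) (f g : MvPowerSeries σ ℚ) (n : ℕ) :
    homComp N (odot N f g) n =
      ∑ p ∈ Finset.HasAntidiagonal.antidiagonal n,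
        ((n.choose p.1 : ℚ)) • (homComp N f p.1 * homComp N g p.2) := by
  apply MvPowerSeries.ext; intro d
  rw [map_sum, coeff_homComp]
  by_cases hd : monDeg d = N * n
  · rw [if_pos hd, coeff_odot]
    have key : ∀ k l : ℕ, k + l ≠ n →
        MvPowerSeries.coeff d (homComp N f k * homComp N g l) = 0 := by
      intro k l hkl
      refine homSupp_prodComp N f g k l d ?_
      rw [hd]
      exact fun hh => hkl (Nat.eq_of_mul_eq_mul_left hN hh.symm)
    have hn_le : n ≤ monDeg d := by
      rw [hd]; exact le_mul_of_one_le_left (Nat.zero_le _) hN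
    have inner : ∀ k ∈ Finset.range (monDeg d + 1),
        (∑ l ∈ Finset.range (monDeg d + 1),
          ((k + l).choose k : ℚ) * MvPowerSeries.coeff d (homComp N f k * homComp N g l))
        = if k ≤ n then (n.choose k : ℚ)
            * MvPowerSeries.coeff d (homComp N f k * homComp N g (n - k)) else 0 := by
      intro k _
      by_cases hk : k ≤ n
      · rw [if_pos hk, Finset.sum_eq_single (n - k)]
        · rw [Nat.add_sub_cancel' hk]
        · intro l _ hl
          rw [key k l (by omega), mul_zero]
        · intro hnot
          exact absurd (Finset.mem_range.2 (by omega)) hnot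
      · rw [if_neg hk]
        refine Finset.sum_eq_zero fun l _ => ?_
        rw [key k l (by omega), mul_zero]
    rw [Finset.sum_congr rfl inner,
      ← Finset.sum_subset (Finset.range_subset_range.2 (by omega) :
        Finset.range (n + 1) ⊆ Finset.range (monDeg d + 1))
        (fun x _ hx => if_neg (by simp at hx; omega))]
    rw [Finset.Nat.sum_antidiagonal_eq_sum_range_succ
      (fun k l => MvPowerSeries.coeff d ((n.choose k : ℚ) • (homComp N f k * homComp N g l)))]
    refine Finset.sum_congr rfl fun k hk => ?_
    rw [if_pos (by simp at hk; omega), map_smul, smul_eq_mul]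
  · rw [if_neg hd]
    symm
    refine Finset.sum_eq_zero fun p hp => ?_
    rw [Finset.HasAntidiagonal.mem_antidiagonal] at hp
    rw [map_smul, homSupp_prodComp N f g p.1 p.2 d (by rw [hp]; exact hd), smul_zero]

lemma etrans_odot (N : ℕ) (hN : 1 ≤ N) (f g : MvPowerSeries σ ℚ) :
    Etrans N (odot N f g) = Etrans N f * Etrans N g := by
  apply PowerSeries.ext; intro n
  rw [PowerSeries.coeff_mul]
  simp only [Etrans, PowerSeries.coeff_mk]
  rw [homComp_odot N hN, Finset.smul_sum]
  refine Finset.sum_congr rfl fun p hp => ?_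
  rw [Finset.HasAntidiagonal.mem_antidiagonal] at hp
  rw [smul_mul_smul_comm, smul_smul]
  congr 1
  have h1 : (p.1.factorial : ℚ) ≠ 0 := Nat.cast_ne_zero.2 (Nat.factorial_ne_zero _)
  have h2 : (p.2.factorial : ℚ) ≠ 0 := Nat.cast_ne_zero.2 (Nat.factorial_ne_zero _)
  have h3 : (n.factorial : ℚ) ≠ 0 := Nat.cast_ne_zero.2 (Nat.factorial_ne_zero _)
  rw [← hp, Nat.cast_add_choose]
  field_simp

lemma homComp_eq_coeff_etrans (N : ℕ) (A : MvPowerSeries σ ℚ) (n : ℕ) :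
    homComp N A n = (n.factorial : ℚ) • PowerSeries.coeff n (Etrans N A) := by
  have h3 : (n.factorial : ℚ) ≠ 0 := Nat.cast_ne_zero.2 (Nat.factorial_ne_zero _)
  simp [Etrans, smul_smul, mul_inv_cancel₀ h3]

lemma eq_of_homComp (N : ℕ) (hN : 1 ≤ N) (A B : MvPowerSeries σ ℚ)
    (hA : InTheta N A) (hB : InTheta N B)
    (hc : ∀ k, homComp N A k = homComp N B k) : A = B := by
  apply MvPowerSeries.ext; intro d
  by_cases hd : N ∣ monDeg d
  · obtain ⟨k, hk⟩ := hd
    have h1 := congrArg (MvPowerSeries.coeff d) (hc k)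
    rwa [coeff_homComp, coeff_homComp, if_pos hk, if_pos hk] at h1
  · rw [hA d hd, hB d hd]

lemma homComp_add_smul (N : ℕ) (c : ℚ) (f g : MvPowerSeries σ ℚ) (k : ℕ) :
    homComp N (c • f + g) k = c • homComp N f k + homComp N g k := by
  apply MvPowerSeries.ext; intro d
  rw [map_add, map_smul, coeff_homComp, coeff_homComp, coeff_homComp, smul_eq_mul]
  split_ifs with hd
  · rw [map_add, map_smul, smul_eq_mul]
  · ring

lemma odot_add_smul (N : ℕ) (c : ℚ) (f g h : MvPowerSeries σ ℚ) :
    odot N (c • f + g) h = c • odot N f h + odot N g h := by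
  apply MvPowerSeries.ext; intro d
  rw [map_add, map_smul, coeff_odot, coeff_odot, coeff_odot, smul_eq_mul, Finset.mul_sum,
    ← Finset.sum_add_distrib]
  refine Finset.sum_congr rfl fun k _ => ?_
  rw [Finset.mul_sum, ← Finset.sum_add_distrib]
  refine Finset.sum_congr rfl fun l _ => ?_
  rw [homComp_add_smul, add_mul, smul_mul_assoc, map_add, map_smul, smul_eq_mul]
  ring

lemma odot_comm' (N : ℕ) (f g : MvPowerSeries σ ℚ) : odot N f g = odot N g f := by
  apply MvPowerSeries.ext; intro d
  rw [coeff_odot, coeff_odot, Finset.sum_comm]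
  refine Finset.sum_congr rfl fun k _ => Finset.sum_congr rfl fun l _ => ?_
  rw [mul_comm (homComp N f l), Nat.choose_symm_add, Nat.add_comm l k]

lemma odot_assoc' (N : ℕ) (hN : 1 ≤ N) (f g h : MvPowerSeries σ ℚ) :
    odot N (odot N f g) h = odot N f (odot N g h) := by
  have hE : Etrans N (odot N (odot N f g) h) = Etrans N (odot N f (odot N g h)) := by
    rw [etrans_odot N hN, etrans_odot N hN, etrans_odot N hN, etrans_odot N hN, mul_assoc]
  refine eq_of_homComp N hN _ _ (inTheta_odot N _ _) (inTheta_odot N _ _) fun k => ?_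
  rw [homComp_eq_coeff_etrans, homComp_eq_coeff_etrans, hE]

/-- `⊙` is ℚ-bilinear, commutative and associative on `Θ`. -/
theorem odot_bilinear_comm_assoc {σ : Type*} (N : ℕ) (hN : 1 ≤ N)
    (f g h : MvPowerSeries σ ℚ) (hf : InTheta N f) (hg : InTheta N g) (hh : InTheta N h)
    (c : ℚ) :
    odot N (c • f + g) h = c • odot N f h + odot N g h ∧
    odot N f g = odot N g f ∧
    odot N (odot N f g) h = odot N f (odot N g h) := by
  exact ⟨odot_add_smul N c f g h, odot_comm' N f g, odot_assoc' N hN f g h⟩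
end

section
/- Let r ≥ 1 and let u_1, …, u_r ∈ Θ be pairwise distinct homogeneous polynomials of degree N, so that each 1 − u_i is invertible in MvPowerSeries σ ℚ. Then, with denominators cleared, (∏_{1 ≤ p < q ≤ r} (u_q − u_p)) · E(∏_{i=1}^r (1 − u_i)^{-1}) = Σ_{i=1}^r (−1)^{r−i} · u_i^{r−1} · exp(q·u_i) · ∏_{1 ≤ p < q ≤ r, p ≠ i, q ≠ i} (u_q − u_p), where exp(q·u) denotes Σ_{k ≥ 0} (q^k / k!) · u^k. (In the case r = 1 this reads E((1 − u_1)^{-1}) = exp(q·u_1).) -/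
variable {σ : Type*}

/-! ### Auxiliary lemmas -/

open Finset in
private lemma pair_split' {R : Type*} [CommRing R] {r : ℕ} (f : Fin r → R) (m : Fin r) :
    (∏ p ∈ univ.filter (fun p : Fin r × Fin r => p.1 < p.2), (f p.2 - f p.1)) =
    (∏ p ∈ univ.filter (fun p : Fin r × Fin r => p.1 < p.2 ∧ p.1 ≠ m ∧ p.2 ≠ m),
        (f p.2 - f p.1)) *
      ((∏ j ∈ Iio m, (f m - f j)) * ∏ j ∈ Ioi m, (f j - f m)) := by
  classical
  have hsub : univ.filter (fun p : Fin r × Fin r => p.1 < p.2 ∧ p.1 ≠ m ∧ p.2 ≠ m) ⊆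
      univ.filter (fun p : Fin r × Fin r => p.1 < p.2) := by
    intro p hp; simp only [mem_filter, mem_univ, true_and] at hp ⊢; exact hp.1
  rw [← Finset.prod_sdiff hsub, mul_comm]
  congr 1
  have hset : (univ.filter (fun p : Fin r × Fin r => p.1 < p.2)) \
      (univ.filter (fun p : Fin r × Fin r => p.1 < p.2 ∧ p.1 ≠ m ∧ p.2 ≠ m)) =
      ((Iio m).image (fun j => (j, m))) ∪ ((Ioi m).image (fun j => (m, j))) := by
    ext ⟨p, q⟩
    simp only [mem_sdiff, mem_filter, mem_union, mem_image, mem_Iio, mem_Ioi, mem_univ,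
      true_and, Prod.mk.injEq, not_and, ne_eq, not_not]
    constructor
    · rintro ⟨h1, h2⟩
      by_cases hp : p = m
      · subst hp; right; exact ⟨q, h1, rfl, rfl⟩
      · have hq := h2 h1 hp; subst hq; left; exact ⟨p, h1, rfl, rfl⟩
    · rintro (⟨j, hj, rfl, rfl⟩ | ⟨j, hj, rfl, rfl⟩)
      · exact ⟨hj, fun _ _ => rfl⟩
      · exact ⟨hj, fun _ h => absurd rfl h⟩
  have hdisj : Disjoint ((Iio m).image (fun j : Fin r => (j, m)))
      ((Ioi m).image (fun j : Fin r => (m, j))) := by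
    rw [Finset.disjoint_left]
    rintro ⟨p, q⟩ h1 h2
    simp only [mem_image, mem_Iio, mem_Ioi, Prod.mk.injEq] at h1 h2
    obtain ⟨j, hj, rfl, rfl⟩ := h1
    obtain ⟨j', hj', h, rfl⟩ := h2
    subst h
    exact absurd hj (lt_irrefl _)
  rw [hset, Finset.prod_union hdisj,
    Finset.prod_image (by intro a _ b _ h; exact (Prod.mk.injEq _ _ _ _ ▸ h).1),
    Finset.prod_image (by intro a _ b _ h; exact (Prod.mk.injEq _ _ _ _ ▸ h).2)]

open Finset Polynomial in
private lemma claimC_field {K : Type*} [Field K] {r : ℕ} (hr : 1 ≤ r) (b : Fin r → K)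
    (hb0 : ∀ i, b i ≠ 0) (hbinj : Function.Injective b) :
    (C (∏ p ∈ univ.filter (fun p : Fin r × Fin r => p.1 < p.2), (b p.2 - b p.1)) : K[X]) =
    ∑ i : Fin r, C ((-1 : K) ^ (r - 1 - (i : ℕ)) * b i ^ (r - 1) *
        ∏ p ∈ univ.filter (fun p : Fin r × Fin r => p.1 < p.2 ∧ p.1 ≠ i ∧ p.2 ≠ i),
          (b p.2 - b p.1)) *
      ∏ j ∈ univ.erase i, (1 - C (b j) * X) := by
  classical
  have hcard : (#(univ : Finset (Fin r)) : WithBot ℕ) = (r : WithBot ℕ) := by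
    simp
  apply eq_of_degrees_lt_of_eval_index_eq (v := fun i => (b i)⁻¹) univ
  · intro i _ j _ h
    exact hbinj (inv_inj.mp h)
  · rw [hcard]
    refine degree_C_le.trans_lt ?_
    exact_mod_cast Nat.pos_of_ne_zero (by omega)
  · rw [hcard]
    refine (degree_sum_le _ _).trans_lt ?_
    rw [Finset.sup_lt_iff
      (by exact_mod_cast WithBot.bot_lt_coe r : (⊥ : WithBot ℕ) < (r : WithBot ℕ))]
    intro i _
    refine (degree_mul_le _ _).trans_lt ?_
    have h1 : (∏ j ∈ univ.erase i, (1 - C (b j) * X)).degree ≤ ((r - 1 : ℕ) : WithBot ℕ) := by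
      refine (degree_prod_le _ _).trans ?_
      have : ∀ j ∈ univ.erase i, (1 - C (b j) * X).degree ≤ ((1 : ℕ) : WithBot ℕ) := by
        intro j _
        refine (degree_sub_le _ _).trans ?_
        refine max_le (degree_one_le.trans ?_) ?_
        · exact_mod_cast Nat.zero_le 1
        · exact_mod_cast degree_C_mul_X_le (b j)
      refine (Finset.sum_le_sum this).trans ?_
      rw [Finset.sum_const, Finset.card_erase_of_mem (mem_univ i)]
      simp [Finset.card_univ, nsmul_eq_mul]
    calc (C ((-1 : K) ^ (r - 1 - (i : ℕ)) * b i ^ (r - 1) *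
        ∏ p ∈ univ.filter (fun p : Fin r × Fin r => p.1 < p.2 ∧ p.1 ≠ i ∧ p.2 ≠ i),
          (b p.2 - b p.1))).degree + (∏ j ∈ univ.erase i, (1 - C (b j) * X)).degree
        ≤ 0 + ((r - 1 : ℕ) : WithBot ℕ) := add_le_add degree_C_le h1
      _ < (r : WithBot ℕ) := by
          rw [zero_add]
          exact_mod_cast Nat.sub_lt (by omega) one_pos
  · intro m _
    rw [eval_C, eval_finset_sum]
    rw [Finset.sum_eq_single m]
    · set e := r - 1 - (m : ℕ)
      set Vm := ∏ p ∈ univ.filter (fun p : Fin r × Fin r => p.1 < p.2 ∧ p.1 ≠ m ∧ p.2 ≠ m),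
          (b p.2 - b p.1)
      simp only [eval_mul, eval_C, eval_prod, eval_sub, eval_one, eval_X]
      have herase : ∀ g : Fin r → K, ∏ j ∈ univ.erase m, g j =
          (∏ j ∈ Iio m, g j) * ∏ j ∈ Ioi m, g j := by
        intro g
        have : (univ.erase m) = Iio m ∪ Ioi m := by
          ext j
          simp only [mem_erase, mem_univ, and_true, mem_union, mem_Iio, mem_Ioi]
          exact ⟨fun h => h.lt_or_gt, fun h => h.elim LT.lt.ne LT.lt.ne'⟩
        rw [this, Finset.prod_union (by
          rw [Finset.disjoint_left]; intro j h1 h2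
          exact absurd ((mem_Iio.mp h1).trans (mem_Ioi.mp h2)) (lt_irrefl _))]
      have hprod : ∏ j ∈ univ.erase m, (1 - b j * (b m)⁻¹) =
          ((∏ j ∈ Iio m, (b m - b j)) * ((-1 : K) ^ e * ∏ j ∈ Ioi m, (b j - b m)))
            / (b m) ^ (r - 1) := by
        have step1 : ∏ j ∈ univ.erase m, (1 - b j * (b m)⁻¹) =
            (∏ j ∈ univ.erase m, (b m - b j)) / (b m) ^ (r - 1) := by
          rw [Finset.prod_congr rfl (fun j _ => show 1 - b j * (b m)⁻¹ = (b m - b j) / b m by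
            rw [eq_div_iff (hb0 m), sub_mul, one_mul, mul_assoc, inv_mul_cancel₀ (hb0 m),
              mul_one]),
            Finset.prod_div_distrib, Finset.prod_const,
            Finset.card_erase_of_mem (mem_univ m), Finset.card_univ, Fintype.card_fin]
        rw [step1, herase (fun j => b m - b j)]
        congr 1
        congr 1
        rw [Finset.prod_congr rfl (fun j _ => show b m - b j = -1 * (b j - b m) by ring),
          Finset.prod_mul_distrib, Finset.prod_const, Fin.card_Ioi]
      rw [hprod, pair_split' b m]
      have key : ((-1 : K) ^ e) * ((-1 : K) ^ e) = 1 := by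
        rw [← pow_add]
        exact Even.neg_one_pow ⟨e, rfl⟩
      have hbm : (b m : K) ^ (r - 1) ≠ 0 := pow_ne_zero _ (hb0 m)
      calc Vm * ((∏ j ∈ Iio m, (b m - b j)) * ∏ j ∈ Ioi m, (b j - b m))
          = (((-1 : K) ^ e) * ((-1 : K) ^ e)) *
            (Vm * ((∏ j ∈ Iio m, (b m - b j)) * ∏ j ∈ Ioi m, (b j - b m))) *
            ((b m) ^ (r - 1) / (b m) ^ (r - 1)) := by
              rw [key, div_self hbm]; ring
        _ = (-1 : K) ^ e * b m ^ (r - 1) * Vm *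
            (((∏ j ∈ Iio m, (b m - b j)) * ((-1 : K) ^ e * ∏ j ∈ Ioi m, (b j - b m)))
              / (b m) ^ (r - 1)) := by
              field_simp
    · intro j _ hj
      simp only [eval_mul, eval_prod, eval_sub, eval_one, eval_C, eval_X]
      have : (1 - b m * (b m)⁻¹) = 0 := by
        rw [mul_inv_cancel₀ (hb0 m)]; ring
      rw [Finset.prod_eq_zero (Finset.mem_erase.mpr ⟨Ne.symm hj, mem_univ m⟩) this, mul_zero]
    · intro h
      exact absurd (mem_univ m) h

open Finset Polynomial in
private lemma claimC {R : Type*} [CommRing R] {r : ℕ} (hr : 1 ≤ r) (a : Fin r → R) :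
    (C (∏ p ∈ univ.filter (fun p : Fin r × Fin r => p.1 < p.2), (a p.2 - a p.1)) : R[X]) =
    ∑ i : Fin r, C ((-1 : R) ^ (r - 1 - (i : ℕ)) * a i ^ (r - 1) *
        ∏ p ∈ univ.filter (fun p : Fin r × Fin r => p.1 < p.2 ∧ p.1 ≠ i ∧ p.2 ≠ i),
          (a p.2 - a p.1)) *
      ∏ j ∈ univ.erase i, (1 - C (a j) * X) := by
  classical
  set R₀ := MvPolynomial (Fin r) ℤ
  let K := FractionRing R₀
  have halg : Function.Injective (algebraMap R₀ K) := IsFractionRing.injective R₀ K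
  have hmapinj : Function.Injective (Polynomial.map (algebraMap R₀ K)) :=
    Polynomial.map_injective _ halg
  have h0 : (C (∏ p ∈ univ.filter (fun p : Fin r × Fin r => p.1 < p.2),
        (MvPolynomial.X p.2 - MvPolynomial.X p.1 : R₀)) : R₀[X]) =
      ∑ i : Fin r, C ((-1 : R₀) ^ (r - 1 - (i : ℕ)) * (MvPolynomial.X i) ^ (r - 1) *
          ∏ p ∈ univ.filter (fun p : Fin r × Fin r => p.1 < p.2 ∧ p.1 ≠ i ∧ p.2 ≠ i),
            (MvPolynomial.X p.2 - MvPolynomial.X p.1)) *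
        ∏ j ∈ univ.erase i, (1 - C (MvPolynomial.X j : R₀) * X) := by
    apply hmapinj
    have hb0 : ∀ i : Fin r, algebraMap R₀ K (MvPolynomial.X i) ≠ 0 := fun i => by
      simp only [ne_eq, map_eq_zero_iff _ halg]
      exact MvPolynomial.X_ne_zero i
    have hbinj : Function.Injective (fun i : Fin r => algebraMap R₀ K (MvPolynomial.X i)) := by
      intro i j h
      have := halg h
      by_contra hne
      exact hne (MvPolynomial.X_injective this)
    have := claimC_field hr (fun i : Fin r => algebraMap R₀ K (MvPolynomial.X i)) hb0 hbinj
    simpa only [Polynomial.map_C, Polynomial.map_sum, Polynomial.map_mul, Polynomial.map_prod,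
      Polynomial.map_sub, Polynomial.map_one, Polynomial.map_X, Polynomial.map_pow,
      Polynomial.map_neg, map_prod, map_sum, map_mul,
      map_sub, map_pow, map_neg, map_one] using this
  have := congrArg (Polynomial.map (MvPolynomial.eval₂Hom (Int.castRingHom R) a)) h0
  simpa only [Polynomial.map_C, Polynomial.map_sum, Polynomial.map_mul, Polynomial.map_prod,
    Polynomial.map_sub, Polynomial.map_one, Polynomial.map_X, Polynomial.map_pow,
    Polynomial.map_neg, map_prod, map_sum, map_mul,
    map_sub, map_pow, map_neg, map_one, MvPolynomial.eval₂Hom_X'] using this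

noncomputable def geom {R : Type*} [CommRing R] (a : R) : PowerSeries R :=
  PowerSeries.mk fun k => a ^ k

lemma one_sub_mul_geom {R : Type*} [CommRing R] (a : R) :
    (1 - PowerSeries.C a * PowerSeries.X) * geom a = 1 := by
  apply PowerSeries.ext; intro k
  rw [sub_mul, one_mul, map_sub, mul_assoc, PowerSeries.coeff_C_mul]
  cases k with
  | zero =>
      simp [geom, PowerSeries.coeff_zero_X_mul]
  | succ k =>
      rw [PowerSeries.coeff_succ_X_mul]
      simp [geom, PowerSeries.coeff_mk, pow_succ, PowerSeries.coeff_one, mul_comm]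

open Finset in
private lemma claimC_ps {R : Type*} [CommRing R] {r : ℕ} (hr : 1 ≤ r) (a : Fin r → R) :
    (PowerSeries.C (∏ p ∈ univ.filter (fun p : Fin r × Fin r => p.1 < p.2),
        (a p.2 - a p.1))) =
    ∑ i : Fin r, PowerSeries.C ((-1 : R) ^ (r - 1 - (i : ℕ)) * a i ^ (r - 1) *
        ∏ p ∈ univ.filter (fun p : Fin r × Fin r => p.1 < p.2 ∧ p.1 ≠ i ∧ p.2 ≠ i),
          (a p.2 - a p.1)) *
      ∏ j ∈ univ.erase i, (1 - PowerSeries.C (a j) * PowerSeries.X) := by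
  have := congrArg (Polynomial.coeToPowerSeries.ringHom (R := R)) (claimC hr a)
  simpa only [map_sum, map_mul, map_prod, map_sub, map_one,
    Polynomial.coeToPowerSeries.ringHom_apply, Polynomial.coe_C, Polynomial.coe_X] using this

open Finset in
private lemma key_ps {R : Type*} [CommRing R] {r : ℕ} (hr : 1 ≤ r) (a : Fin r → R) :
    (PowerSeries.C (∏ p ∈ univ.filter (fun p : Fin r × Fin r => p.1 < p.2),
        (a p.2 - a p.1))) * ∏ j, geom (a j) =
    ∑ i : Fin r, PowerSeries.C ((-1 : R) ^ (r - 1 - (i : ℕ)) * a i ^ (r - 1) *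
        ∏ p ∈ univ.filter (fun p : Fin r × Fin r => p.1 < p.2 ∧ p.1 ≠ i ∧ p.2 ≠ i),
          (a p.2 - a p.1)) * geom (a i) := by
  rw [claimC_ps hr a, Finset.sum_mul]
  apply Finset.sum_congr rfl
  intro i _
  rw [mul_assoc]
  congr 1
  calc (∏ j ∈ univ.erase i, (1 - PowerSeries.C (a j) * PowerSeries.X)) * ∏ j, geom (a j)
      = (∏ j ∈ univ.erase i, (1 - PowerSeries.C (a j) * PowerSeries.X)) *
        (geom (a i) * ∏ j ∈ univ.erase i, geom (a j)) := by
          rw [← Finset.mul_prod_erase _ _ (mem_univ i)]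
    _ = geom (a i) * ∏ j ∈ univ.erase i,
          ((1 - PowerSeries.C (a j) * PowerSeries.X) * geom (a j)) := by
          rw [Finset.prod_mul_distrib]; ring
    _ = geom (a i) := by
          rw [Finset.prod_congr rfl (fun j _ => one_sub_mul_geom (a j)), Finset.prod_const_one,
            mul_one]

lemma monDeg_zero : monDeg (0 : σ →₀ ℕ) = 0 := Finsupp.sum_zero_index

lemma monDeg_eq_zero {d : σ →₀ ℕ} (h : monDeg d = 0) : d = 0 := by
  ext s
  simp only [Finsupp.coe_zero, Pi.zero_apply]
  by_cases hs : s ∈ d.support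
  · have h' : ∑ a ∈ d.support, d a = 0 := by simpa [monDeg, Finsupp.sum] using h
    exact (Finset.sum_eq_zero_iff.mp h') s hs
  · exact Finsupp.notMem_support_iff.mp hs

lemma coeff_zero_of_homog {N : ℕ} (hN : 1 ≤ N) {u : MvPowerSeries σ ℚ} (hu : IsHomogDeg N u) :
    MvPowerSeries.constantCoeff u = 0 := by
  rw [← MvPowerSeries.coeff_zero_eq_constantCoeff]
  by_contra h
  have := hu.2 0 h
  rw [monDeg_zero] at this
  omega

lemma homComp_sub (N : ℕ) (f g : MvPowerSeries σ ℚ) (k : ℕ) :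
    homComp N (f - g) k = homComp N f k - homComp N g k := by
  apply MvPowerSeries.ext; intro d
  simp only [coeff_homComp, map_sub]
  split <;> simp

lemma homComp_one (N : ℕ) (hN : 1 ≤ N) (k : ℕ) :
    homComp N (1 : MvPowerSeries σ ℚ) k = if k = 0 then 1 else 0 := by
  classical
  apply MvPowerSeries.ext; intro d
  rw [coeff_homComp]
  rcases Nat.eq_zero_or_pos k with rfl | hk
  · rw [if_pos rfl, mul_zero]
    by_cases hd : monDeg d = 0
    · rw [if_pos hd]
    · rw [if_neg hd, MvPowerSeries.coeff_one,
        if_neg (fun h => hd (by rw [h, monDeg_zero]))]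
  · have hR : (MvPowerSeries.coeff d) (if k = 0 then (1 : MvPowerSeries σ ℚ) else 0) = 0 := by
      rw [if_neg (by omega : ¬ k = 0), map_zero]
    rw [hR]
    by_cases hd : monDeg d = N * k
    · rw [if_pos hd, MvPowerSeries.coeff_one, if_neg]
      intro h'
      rw [h', monDeg_zero] at hd
      have hNk : N * k ≠ 0 := Nat.mul_ne_zero (by omega) (by omega)
      omega
    · rw [if_neg hd]

lemma homComp_mul_homog_zero {N : ℕ} (hN : 1 ≤ N) {u : MvPowerSeries σ ℚ}
    (hu : IsHomogDeg N u) (g : MvPowerSeries σ ℚ) : homComp N (u * g) 0 = 0 := by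
  apply MvPowerSeries.ext; intro d
  rw [coeff_homComp, map_zero, mul_zero]
  by_cases hd : monDeg d = 0
  · rw [if_pos hd, monDeg_eq_zero hd, MvPowerSeries.coeff_zero_eq_constantCoeff, map_mul,
      coeff_zero_of_homog hN hu, zero_mul]
  · rw [if_neg hd]

lemma homComp_mul_homog {N : ℕ} (hN : 1 ≤ N) {u : MvPowerSeries σ ℚ}
    (hu : IsHomogDeg N u) (g : MvPowerSeries σ ℚ) (k : ℕ) :
    homComp N (u * g) (k + 1) = u * homComp N g k := by
  classical
  apply MvPowerSeries.ext; intro d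
  rw [coeff_homComp, MvPowerSeries.coeff_mul, MvPowerSeries.coeff_mul]
  by_cases hd : monDeg d = N * (k + 1)
  · rw [if_pos hd]
    apply Finset.sum_congr rfl
    intro p hp
    have hsum : monDeg p.1 + monDeg p.2 = N * (k + 1) := by
      rw [← monDeg_add, Finset.HasAntidiagonal.mem_antidiagonal.mp hp, hd]
    by_cases hu1 : MvPowerSeries.coeff p.1 u = 0
    · rw [hu1, zero_mul, zero_mul]
    · have h1 : monDeg p.1 = N := hu.2 _ hu1
      have h2 : monDeg p.2 = N * k := by
        have : N * (k + 1) = N * k + N := by ring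
        omega
      rw [coeff_homComp, if_pos h2]
  · rw [if_neg hd]
    symm
    apply Finset.sum_eq_zero
    intro p hp
    by_cases hu1 : MvPowerSeries.coeff p.1 u = 0
    · rw [hu1, zero_mul]
    · rw [coeff_homComp, if_neg, mul_zero]
      intro h2
      apply hd
      have h1 : monDeg p.1 = N := hu.2 _ hu1
      have : monDeg p.1 + monDeg p.2 = monDeg d := by
        rw [← monDeg_add, Finset.HasAntidiagonal.mem_antidiagonal.mp hp]
      have : N * (k + 1) = N * k + N := by ring
      omega

/-- The map `f ↦ Σ_k f^(k) t^k`. -/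
noncomputable def phi (N : ℕ) (f : MvPowerSeries σ ℚ) : PowerSeries (MvPowerSeries σ ℚ) :=
  PowerSeries.mk fun k => homComp N f k

lemma phi_one (N : ℕ) (hN : 1 ≤ N) : phi (σ := σ) N 1 = 1 := by
  apply PowerSeries.ext; intro k
  rw [phi, PowerSeries.coeff_mk, homComp_one N hN, PowerSeries.coeff_one]

lemma phi_one_sub_mul {N : ℕ} (hN : 1 ≤ N) {u : MvPowerSeries σ ℚ}
    (hu : IsHomogDeg N u) (g : MvPowerSeries σ ℚ) :
    phi N ((1 - u) * g) =
      (1 - PowerSeries.C u * PowerSeries.X) * phi N g := by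
  apply PowerSeries.ext; intro k
  rw [sub_mul, one_mul, sub_mul, one_mul, map_sub]
  simp only [phi, PowerSeries.coeff_mk]
  rw [homComp_sub]
  congr 1
  rw [mul_assoc, PowerSeries.coeff_C_mul]
  cases k with
  | zero =>
      rw [homComp_mul_homog_zero hN hu, PowerSeries.coeff_zero_X_mul, mul_zero]
  | succ k =>
      rw [homComp_mul_homog hN hu, PowerSeries.coeff_succ_X_mul, PowerSeries.coeff_mk]

open Finset in
lemma phi_prod_mul {N : ℕ} (hN : 1 ≤ N) {r : ℕ} (u : Fin r → MvPowerSeries σ ℚ)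
    (hu : ∀ i, IsHomogDeg N (u i)) (s : Finset (Fin r)) (g : MvPowerSeries σ ℚ) :
    phi N ((∏ i ∈ s, (1 - u i)) * g) =
      (∏ i ∈ s, (1 - PowerSeries.C (u i) * PowerSeries.X)) * phi N g := by
  classical
  induction s using Finset.induction_on with
  | empty => simp
  | insert _ _ hx ih =>
      rename_i a s'
      rw [Finset.prod_insert hx, Finset.prod_insert hx, mul_assoc,
        phi_one_sub_mul hN (hu a), ih, mul_assoc]

/-- with denominators cleared,
`(∏_{p<q} (u_q - u_p)) · E(∏_i (1-u_i)⁻¹)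
  = Σ_i (-1)^{r-i} u_i^{r-1} exp(q·u_i) ∏_{p<q, p,q≠i} (u_q - u_p)`
(indices `1,…,r`; here `i : Fin r` corresponds to `i+1`, so the sign is `(-1)^(r-1-i)`). -/
theorem Etrans_prod_inv_one_sub {σ : Type*} (N : ℕ) (hN : 1 ≤ N) (r : ℕ) (hr : 1 ≤ r)
    (u : Fin r → MvPowerSeries σ ℚ) (hu : ∀ i, IsHomogDeg N (u i))
    (huinj : Function.Injective u) :
    PowerSeries.C
        (∏ p ∈ Finset.univ.filter (fun p : Fin r × Fin r => p.1 < p.2), (u p.2 - u p.1)) *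
      Etrans N (∏ i, (1 - u i)⁻¹) =
    ∑ i : Fin r, (-1 : PowerSeries (MvPowerSeries σ ℚ)) ^ (r - 1 - (i : ℕ)) *
      PowerSeries.C
        (u i ^ (r - 1) *
          ∏ p ∈ Finset.univ.filter
              (fun p : Fin r × Fin r => p.1 < p.2 ∧ p.1 ≠ i ∧ p.2 ≠ i),
            (u p.2 - u p.1)) *
      expQ (u i) := by
  classical
  set F : MvPowerSeries σ ℚ := ∏ i, (1 - u i)⁻¹ with hF
  have hconst : ∀ i, MvPowerSeries.constantCoeff (1 - u i) ≠ 0 := by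
    intro i
    rw [map_sub, map_one, coeff_zero_of_homog hN (hu i), sub_zero]
    exact one_ne_zero
  have hFP : (∏ i, (1 - u i)) * F = 1 := by
    rw [hF, ← Finset.prod_mul_distrib,
      Finset.prod_congr rfl (fun i _ => MvPowerSeries.mul_inv_cancel _ (hconst i)),
      Finset.prod_const_one]
  have h1 : (∏ i, (1 - PowerSeries.C (u i) * PowerSeries.X)) * phi N F
      = 1 := by
    rw [← phi_prod_mul hN u hu Finset.univ F, hFP, phi_one N hN]
  have hphiF : phi N F = ∏ i, geom (u i) := by
    calc phi N F
        = phi N F * ∏ i, ((1 - PowerSeries.C (u i) * PowerSeries.X) *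
            geom (u i)) := by
          rw [Finset.prod_congr rfl (fun i _ => one_sub_mul_geom (u i)),
            Finset.prod_const_one, mul_one]
      _ = ((∏ i, (1 - PowerSeries.C (u i) * PowerSeries.X)) * phi N F) *
            ∏ i, geom (u i) := by
          rw [Finset.prod_mul_distrib]; ring
      _ = ∏ i, geom (u i) := by rw [h1, one_mul]
  apply PowerSeries.ext
  intro k
  have hcoeff : (∏ p ∈ Finset.univ.filter (fun p : Fin r × Fin r => p.1 < p.2),
        (u p.2 - u p.1)) * homComp N F k =
      ∑ i : Fin r, ((-1 : MvPowerSeries σ ℚ) ^ (r - 1 - (i : ℕ)) * u i ^ (r - 1) *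
        ∏ p ∈ Finset.univ.filter (fun p : Fin r × Fin r => p.1 < p.2 ∧ p.1 ≠ i ∧ p.2 ≠ i),
          (u p.2 - u p.1)) * u i ^ k := by
    have h := congrArg (PowerSeries.coeff k) (key_ps hr u)
    rw [← hphiF, PowerSeries.coeff_C_mul, map_sum] at h
    simp only [phi, PowerSeries.coeff_mk, PowerSeries.coeff_C_mul, geom] at h
    exact h
  have hsignC : ∀ (e : ℕ) (b : MvPowerSeries σ ℚ),
      (-1 : PowerSeries (MvPowerSeries σ ℚ)) ^ e * PowerSeries.C b =
        PowerSeries.C ((-1 : MvPowerSeries σ ℚ) ^ e * b) := by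
    intro e b
    have h1 : (-1 : PowerSeries (MvPowerSeries σ ℚ)) =
        PowerSeries.C (-1) := by rw [map_neg, map_one]
    rw [h1, ← map_pow, ← map_mul]
  rw [PowerSeries.coeff_C_mul, map_sum, Etrans, PowerSeries.coeff_mk]
  simp only [hsignC, PowerSeries.coeff_C_mul, expQ, PowerSeries.coeff_mk]
  simp only [mul_smul_comm]
  rw [← Finset.smul_sum]
  congr 1
  rw [hcoeff]
  exact Finset.sum_congr rfl fun i _ => by ring
end

section
/- Let m ≥ 1, let k ∈ {0, 1, …, m−1}, and let a_1, …, a_k, u_1, …, u_m, v ∈ Θ be homogeneous polynomials of degree N such that u_1, …, u_m are pairwise distinct. Then (a_1⋯a_k · ∏_{i=1}^m (1 − u_i)^{-1}) ⊙ (1 − v)^{-1} = a_1⋯a_k · (1 − v)^{m−k−1} · ∏_{i=1}^m (1 − u_i − v)^{-1}, an identity in MvPowerSeries σ ℚ (all series 1 − u_i, 1 − v, 1 − u_i − v have constant term 1 and hence are invertible). -/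
variable {σ : Type*}

namespace Aux
local notation "R" => MvPowerSeries σ ℚ

lemma coeff_apply (f : MvPowerSeries σ ℚ) (d : σ →₀ ℕ) :
    MvPowerSeries.coeff d f = f d := rfl

lemma monDeg_add (d e : σ →₀ ℕ) : monDeg (d + e) = monDeg d + monDeg e := by
  unfold monDeg
  exact Finsupp.sum_add_index' (fun _ => rfl) (fun _ _ _ => rfl)

lemma monDeg_zero : monDeg (0 : σ →₀ ℕ) = 0 := by
  simp [monDeg]

/-- homogeneity of degree n -/
def Homog (n : ℕ) (f : MvPowerSeries σ ℚ) : Prop :=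
  ∀ d : σ →₀ ℕ, MvPowerSeries.coeff d f ≠ 0 → monDeg d = n

lemma Homog.coeff_eq_zero {n : ℕ} {f : MvPowerSeries σ ℚ} (hf : Homog n f)
    {d : σ →₀ ℕ} (hd : monDeg d ≠ n) : MvPowerSeries.coeff d f = 0 := by
  by_contra h; exact hd (hf d h)

lemma homog_one : Homog 0 (1 : MvPowerSeries σ ℚ) := by
  intro d hd
  classical
  rw [MvPowerSeries.coeff_one] at hd
  split_ifs at hd with h
  · simp [h, monDeg_zero]
  · simp at hd

lemma Homog.mul {n n' : ℕ} {f g : MvPowerSeries σ ℚ} (hf : Homog n f) (hg : Homog n' g) :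
    Homog (n + n') (f * g) := by
  classical
  intro d hd
  rw [MvPowerSeries.coeff_mul] at hd
  obtain ⟨p, hp, hne⟩ := Finset.exists_ne_zero_of_sum_ne_zero hd
  have h1 : MvPowerSeries.coeff p.1 f ≠ 0 := fun h => hne (by simp [h])
  have h2 : MvPowerSeries.coeff p.2 g ≠ 0 := fun h => hne (by simp [h])
  have := Finset.HasAntidiagonal.mem_antidiagonal.mp hp
  rw [← this, monDeg_add, hf _ h1, hg _ h2]

lemma homog_prod {ι : Type*} (s : Finset ι) (f : ι → MvPowerSeries σ ℚ) (n : ι → ℕ)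
    (h : ∀ i ∈ s, Homog (n i) (f i)) :
    Homog (∑ i ∈ s, n i) (∏ i ∈ s, f i) := by
  induction s using Finset.cons_induction with
  | empty => simpa using homog_one
  | cons i s his ih =>
      rw [Finset.prod_cons, Finset.sum_cons]
      exact (h i (Finset.mem_cons_self i s)).mul
        (ih fun j hj => h j (Finset.mem_cons_of_mem hj))

lemma Homog.pow {n : ℕ} {f : MvPowerSeries σ ℚ} (hf : Homog n f) (j : ℕ) :
    Homog (n * j) (f ^ j) := by
  induction j with
  | zero => simpa using homog_one
  | succ j ih =>
      rw [pow_succ, Nat.mul_succ]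
      exact ih.mul hf

lemma Homog.constantCoeff_eq_zero {n : ℕ} {f : MvPowerSeries σ ℚ} (hf : Homog n f)
    (hn : n ≠ 0) : MvPowerSeries.constantCoeff f = 0 := by
  have := hf.coeff_eq_zero (d := 0) (by simp [monDeg_zero, Ne.symm hn])
  simpa using this

lemma homog_add {n : ℕ} {f g : MvPowerSeries σ ℚ} (hf : Homog n f) (hg : Homog n g) :
    Homog n (f + g) := by
  intro d hd
  rw [map_add] at hd
  by_cases h1 : MvPowerSeries.coeff d f = 0
  · exact hg d (by rw [h1, zero_add] at hd; exact hd)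
  · exact hf d h1

variable {N : ℕ}

lemma theta_one : InTheta N (1 : MvPowerSeries σ ℚ) := by
  classical
  intro d hd
  rw [MvPowerSeries.coeff_one]
  split_ifs with h
  · exact absurd (by simp [h, monDeg_zero]) hd
  · rfl

lemma Homog.theta {n : ℕ} {f : MvPowerSeries σ ℚ} (hf : Homog n f) (hn : N ∣ n) :
    InTheta N f := by
  intro d hd
  by_contra h
  exact hd (hf d h ▸ hn)

lemma theta_mul {f g : MvPowerSeries σ ℚ} (hf : InTheta N f) (hg : InTheta N g) :
    InTheta N (f * g) := by
  classical
  intro d hd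
  rw [MvPowerSeries.coeff_mul]
  apply Finset.sum_eq_zero
  intro p hp
  by_cases h1 : N ∣ monDeg p.1
  · have h2 : ¬ N ∣ monDeg p.2 := by
      intro h2
      apply hd
      have := Finset.HasAntidiagonal.mem_antidiagonal.mp hp
      rw [← this, monDeg_add]
      exact Nat.dvd_add h1 h2
    rw [hg _ h2, mul_zero]
  · rw [hf _ h1, zero_mul]

lemma theta_prod {ι : Type*} (s : Finset ι) (f : ι → MvPowerSeries σ ℚ)
    (h : ∀ i ∈ s, InTheta N (f i)) : InTheta N (∏ i ∈ s, f i) := by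
  induction s using Finset.cons_induction with
  | empty => simpa using theta_one
  | cons i s his ih =>
      rw [Finset.prod_cons]
      exact theta_mul (h i (Finset.mem_cons_self i s))
        (ih fun j hj => h j (Finset.mem_cons_of_mem hj))

lemma theta_sub {f g : MvPowerSeries σ ℚ} (hf : InTheta N f) (hg : InTheta N g) :
    InTheta N (f - g) := by
  intro d hd
  rw [map_sub, hf d hd, hg d hd, sub_zero]

/-- Θ-projection -/
noncomputable def thetaPart (N : ℕ) (f : MvPowerSeries σ ℚ) : MvPowerSeries σ ℚ :=
  fun d => if N ∣ monDeg d then f d else 0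

lemma coeff_thetaPart (f : MvPowerSeries σ ℚ) (d : σ →₀ ℕ) :
    MvPowerSeries.coeff d (thetaPart N f) = if N ∣ monDeg d then f d else 0 := rfl

lemma thetaPart_eq_self {f : MvPowerSeries σ ℚ} (hf : InTheta N f) : thetaPart N f = f := by
  ext d
  rw [coeff_apply]
  unfold thetaPart
  split_ifs with h
  · rfl
  · exact (hf d h).symm

lemma theta_thetaPart (f : MvPowerSeries σ ℚ) : InTheta N (thetaPart N f) := by
  intro d hd
  rw [coeff_thetaPart, if_neg hd]

lemma thetaPart_mul_left {f : MvPowerSeries σ ℚ} (hf : InTheta N f)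
    (g : MvPowerSeries σ ℚ) : thetaPart N (f * g) = f * thetaPart N g := by
  classical
  ext d
  rw [coeff_thetaPart, coeff_apply,
    show (f*g) d = MvPowerSeries.coeff d (f*g) from rfl,
    show (f * thetaPart N g) d = MvPowerSeries.coeff d (f * thetaPart N g) from rfl,
    MvPowerSeries.coeff_mul, MvPowerSeries.coeff_mul]
  split_ifs with h
  · apply Finset.sum_congr rfl
    intro p hp
    by_cases h1 : MvPowerSeries.coeff p.1 f = 0
    · rw [h1, zero_mul, zero_mul]
    · have hd1 : N ∣ monDeg p.1 := by
        by_contra hc; exact h1 (hf _ hc)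
      have hd2 : N ∣ monDeg p.2 := by
        have := Finset.HasAntidiagonal.mem_antidiagonal.mp hp
        have hsum : monDeg p.1 + monDeg p.2 = monDeg d := by rw [← monDeg_add, this]
        exact (Nat.dvd_add_right hd1).mp (hsum ▸ h)
      rw [coeff_thetaPart, if_pos hd2, coeff_apply]
      rfl
  · symm
    apply Finset.sum_eq_zero
    intro p hp
    by_cases h1 : MvPowerSeries.coeff p.1 f = 0
    · rw [h1, zero_mul]
    · have hd1 : N ∣ monDeg p.1 := by by_contra hc; exact h1 (hf _ hc)
      have hd2 : ¬ N ∣ monDeg p.2 := by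
        intro hc
        apply h
        have := Finset.HasAntidiagonal.mem_antidiagonal.mp hp
        rw [← this, monDeg_add]
        exact Nat.dvd_add hd1 hc
      rw [coeff_thetaPart, if_neg hd2, mul_zero]

lemma theta_inv {f : MvPowerSeries σ ℚ} (hf : InTheta N f)
    (h0 : MvPowerSeries.constantCoeff f ≠ 0) : InTheta N f⁻¹ := by
  have h1 : f * thetaPart N f⁻¹ = f * f⁻¹ := by
    rw [MvPowerSeries.mul_inv_cancel _ h0, ← thetaPart_mul_left hf,
      MvPowerSeries.mul_inv_cancel _ h0, thetaPart_eq_self theta_one]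
  have h2 : thetaPart N f⁻¹ = f⁻¹ := by
    have := congrArg (fun x => f⁻¹ * x) h1
    simpa [← mul_assoc, MvPowerSeries.inv_mul_cancel _ h0] using this
  rw [← h2]
  exact theta_thetaPart _

lemma theta_pow {f : MvPowerSeries σ ℚ} (hf : InTheta N f) (j : ℕ) : InTheta N (f ^ j) := by
  induction j with
  | zero => simpa using theta_one
  | succ j ih => rw [pow_succ]; exact theta_mul ih hf

lemma coeff_homComp (f : MvPowerSeries σ ℚ) (s : ℕ) (d : σ →₀ ℕ) :
    MvPowerSeries.coeff d (homComp N f s) =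
      if monDeg d = N * s then MvPowerSeries.coeff d f else 0 := rfl

lemma theta_ext {f g : MvPowerSeries σ ℚ} (hf : InTheta N f) (hg : InTheta N g)
    (h : ∀ s, homComp N f s = homComp N g s) : f = g := by
  apply MvPowerSeries.ext; intro d
  by_cases hd : N ∣ monDeg d
  · obtain ⟨s, hs⟩ := hd
    have := congrArg (fun x => MvPowerSeries.coeff d x) (h s)
    simpa [coeff_homComp, if_pos hs] using this
  · rw [hf d hd, hg d hd]

lemma homog_homComp (f : MvPowerSeries σ ℚ) (s : ℕ) : Homog (N * s) (homComp N f s) := by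
  intro d hd
  rw [coeff_homComp] at hd
  by_contra h
  rw [if_neg h] at hd
  exact hd rfl

lemma homComp_of_homog {n s : ℕ} {f : MvPowerSeries σ ℚ} (hf : Homog n f) (h : n = N * s) :
    homComp N f s = f := by
  apply MvPowerSeries.ext; intro d
  rw [coeff_homComp]
  split_ifs with hd
  · rfl
  · exact (hf.coeff_eq_zero (h ▸ hd)).symm

lemma homComp_of_homog_ne {n s : ℕ} {f : MvPowerSeries σ ℚ} (hf : Homog n f)
    (h : n ≠ N * s) : homComp N f s = 0 := by
  apply MvPowerSeries.ext; intro d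
  rw [coeff_homComp, map_zero]
  split_ifs with hd
  · exact hf.coeff_eq_zero (hd ▸ (Ne.symm (hd ▸ h)))
  · rfl

lemma homComp_add (f g : MvPowerSeries σ ℚ) (s : ℕ) :
    homComp N (f + g) s = homComp N f s + homComp N g s := by
  apply MvPowerSeries.ext; intro d
  rw [map_add, coeff_homComp, coeff_homComp, coeff_homComp, map_add]
  split_ifs <;> simp

lemma homComp_sub (f g : MvPowerSeries σ ℚ) (s : ℕ) :
    homComp N (f - g) s = homComp N f s - homComp N g s := by
  apply MvPowerSeries.ext; intro d
  rw [map_sub, coeff_homComp, coeff_homComp, coeff_homComp, map_sub]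
  split_ifs <;> simp

lemma homComp_zero (s : ℕ) : homComp N (0 : MvPowerSeries σ ℚ) s = 0 := by
  apply MvPowerSeries.ext; intro d
  rw [coeff_homComp]
  split_ifs <;> simp

lemma homComp_sum {ι : Type*} (t : Finset ι) (f : ι → MvPowerSeries σ ℚ) (s : ℕ) :
    homComp N (∑ i ∈ t, f i) s = ∑ i ∈ t, homComp N (f i) s := by
  induction t using Finset.cons_induction with
  | empty => simpa using homComp_zero s
  | cons i t his ih => rw [Finset.sum_cons, Finset.sum_cons, homComp_add, ih]

lemma homComp_mul (hN : 1 ≤ N) {f : MvPowerSeries σ ℚ} (hf : InTheta N f)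
    (g : MvPowerSeries σ ℚ) (s : ℕ) :
    homComp N (f * g) s =
      ∑ p ∈ Finset.range (s + 1), homComp N f p * homComp N g (s - p) := by
  classical
  apply MvPowerSeries.ext; intro d
  rw [coeff_homComp, map_sum]
  by_cases hd : monDeg d = N * s
  · rw [if_pos hd, MvPowerSeries.coeff_mul]
    have key : ∀ q ∈ Finset.HasAntidiagonal.antidiagonal d,
        MvPowerSeries.coeff q.1 f * MvPowerSeries.coeff q.2 g =
        ∑ p ∈ Finset.range (s + 1),
          MvPowerSeries.coeff q.1 (homComp N f p) *
            MvPowerSeries.coeff q.2 (homComp N g (s - p)) := by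
      intro q hq
      have hsum : monDeg q.1 + monDeg q.2 = N * s := by
        rw [← monDeg_add, Finset.HasAntidiagonal.mem_antidiagonal.mp hq, hd]
      by_cases h1 : MvPowerSeries.coeff q.1 f = 0
      · rw [h1, zero_mul]
        symm
        apply Finset.sum_eq_zero
        intro p _
        rw [coeff_homComp]
        split_ifs with h
        · rw [h1, zero_mul]
        · rw [zero_mul]
      · obtain ⟨p₀, hp₀⟩ : N ∣ monDeg q.1 := by
          by_contra hc; exact h1 (hf _ hc)
        have hp₀le : p₀ ≤ s := by
          by_contra hc
          push_neg at hc
          have : N * s < N * p₀ := (Nat.mul_lt_mul_left hN).mpr hc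
          omega
        rw [Finset.sum_eq_single p₀]
        · rw [coeff_homComp, coeff_homComp, if_pos hp₀, if_pos]
          have hNp : N * p₀ + N * (s - p₀) = N * s := by
            rw [← Nat.mul_add]; congr 1; omega
          omega
        · intro p hp hpne
          rw [coeff_homComp, if_neg, zero_mul]
          intro hcon
          rw [hp₀] at hcon
          exact hpne (Nat.eq_of_mul_eq_mul_left hN hcon).symm
        · intro hcon
          exact absurd (Finset.mem_range.mpr (Nat.lt_succ_of_le hp₀le)) hcon
    rw [Finset.sum_congr rfl key, Finset.sum_comm]
    apply Finset.sum_congr rfl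
    intro p _
    rw [MvPowerSeries.coeff_mul]
  · rw [if_neg hd]
    symm
    apply Finset.sum_eq_zero
    intro p hp
    apply ((homog_homComp f p).mul (homog_homComp g (s - p))).coeff_eq_zero
    intro hcon
    apply hd
    rw [hcon, ← Nat.mul_add]
    congr 1
    have := Finset.mem_range.mp hp
    omega

lemma homComp_mul_higher {n l : ℕ} {g : MvPowerSeries σ ℚ} (hg : Homog n g)
    (hl : N * l < n) (w : MvPowerSeries σ ℚ) : homComp N (g * w) l = 0 := by
  classical
  apply MvPowerSeries.ext; intro d
  rw [coeff_homComp, map_zero]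
  split_ifs with hd
  · rw [MvPowerSeries.coeff_mul]
    apply Finset.sum_eq_zero
    intro p hp
    have hle : monDeg p.1 ≤ monDeg d := by
      rw [← Finset.HasAntidiagonal.mem_antidiagonal.mp hp, monDeg_add]; omega
    rw [hg.coeff_eq_zero (by omega), zero_mul]
  · rfl

/-- `homComp` of the geometric inverse. -/
lemma homComp_inv_one_sub (hN : 1 ≤ N) {v : MvPowerSeries σ ℚ} (hv : Homog N v) (l : ℕ) :
    homComp N ((1 - v)⁻¹) l = v ^ l := by
  have hc : MvPowerSeries.constantCoeff (1 - v) ≠ 0 := by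
    rw [map_sub, map_one, hv.constantCoeff_eq_zero (by omega), sub_zero]
    exact one_ne_zero
  have hdecomp : (1 - v)⁻¹ =
      (∑ j ∈ Finset.range (l + 1), v ^ j) + v ^ (l + 1) * (1 - v)⁻¹ := by
    have hgeom : (1 - v) * (∑ j ∈ Finset.range (l + 1), v ^ j) = 1 - v ^ (l + 1) := by
      have := geom_sum_mul v (l + 1)
      linear_combination -this
    have h2 : (1 - v) * ((∑ j ∈ Finset.range (l + 1), v ^ j) + v ^ (l + 1) * (1 - v)⁻¹) =
        (1 - v) * (1 - v)⁻¹ := by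
      rw [MvPowerSeries.mul_inv_cancel _ hc, mul_add, hgeom]
      have : (1 - v) * (v ^ (l + 1) * (1 - v)⁻¹) =
          v ^ (l + 1) * ((1 - v) * (1 - v)⁻¹) := by ring
      rw [this, MvPowerSeries.mul_inv_cancel _ hc, mul_one]
      ring
    have h3 := congrArg (fun x => (1 - v)⁻¹ * x) h2
    simpa [← mul_assoc, MvPowerSeries.inv_mul_cancel _ hc] using h3.symm
  rw [hdecomp, homComp_add, homComp_sum]
  have hterm : ∀ j ∈ Finset.range (l + 1), homComp N (v ^ j) l = if j = l then v ^ l else 0 := by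
    intro j _
    split_ifs with h
    · subst h
      exact homComp_of_homog (hv.pow j) rfl
    · exact homComp_of_homog_ne (hv.pow j) (by
        intro hcon
        exact h (Nat.eq_of_mul_eq_mul_left hN hcon))
  rw [Finset.sum_congr rfl hterm, Finset.sum_ite_eq' (Finset.range (l + 1)) l (fun _ => v ^ l),
    if_pos (Finset.self_mem_range_succ l),
    homComp_mul_higher (hv.pow (l + 1)) (by
      calc N * l < N * l + N := by omega
        _ = N * (l + 1) := by ring) _, add_zero]

lemma coeff_odot (f g : MvPowerSeries σ ℚ) (d : σ →₀ ℕ) :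
    MvPowerSeries.coeff d (odot N f g) =
      ∑ k ∈ Finset.range (monDeg d + 1), ∑ l ∈ Finset.range (monDeg d + 1),
        ((k + l).choose k : ℚ) *
          MvPowerSeries.coeff d (homComp N f k * homComp N g l) := rfl

lemma theta_odot (f g : MvPowerSeries σ ℚ) : InTheta N (odot N f g) := by
  intro d hd
  rw [coeff_odot]
  apply Finset.sum_eq_zero
  intro p _
  apply Finset.sum_eq_zero
  intro l _
  rw [((homog_homComp f p).mul (homog_homComp g l)).coeff_eq_zero, mul_zero]
  intro hcon
  exact hd ⟨p + l, by rw [hcon, Nat.mul_add]⟩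

/-- Key: the homogeneous component of `odot`. -/
lemma homComp_odot (hN : 1 ≤ N) (f g : MvPowerSeries σ ℚ) (s : ℕ) :
    homComp N (odot N f g) s = ∑ p ∈ Finset.range (s + 1),
      (s.choose p : ℚ) • (homComp N f p * homComp N g (s - p)) := by
  apply MvPowerSeries.ext; intro d
  rw [coeff_homComp, map_sum]
  have coeff_smul : ∀ (c : ℚ) (x : MvPowerSeries σ ℚ),
      MvPowerSeries.coeff d (c • x) = c * MvPowerSeries.coeff d x := fun c x => rfl
  by_cases hd : monDeg d = N * s
  · rw [if_pos hd, coeff_odot]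
    have hns : s ≤ monDeg d := by
      rw [hd]; exact Nat.le_mul_of_pos_left s hN
    have inner : ∀ p ∈ Finset.range (monDeg d + 1),
        (∑ l ∈ Finset.range (monDeg d + 1), ((p + l).choose p : ℚ) *
          MvPowerSeries.coeff d (homComp N f p * homComp N g l)) =
        (s.choose p : ℚ) * MvPowerSeries.coeff d (homComp N f p * homComp N g (s - p)) := by
      intro p _
      have hz : ∀ l, s ≠ p + l → MvPowerSeries.coeff d (homComp N f p * homComp N g l) = 0 := by
        intro l hl
        apply ((homog_homComp f p).mul (homog_homComp g l)).coeff_eq_zero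
        rw [hd, ← Nat.mul_add]
        intro hcon
        exact hl (Nat.eq_of_mul_eq_mul_left hN hcon)
      by_cases hps : p ≤ s
      · rw [Finset.sum_eq_single (s - p)]
        · rw [Nat.add_sub_cancel' hps]
        · intro l _ hlne
          rw [hz l (by omega), mul_zero]
        · intro hcon
          exact absurd (Finset.mem_range.mpr (by omega)) hcon
      · push_neg at hps
        rw [Finset.sum_eq_zero (fun l _ => by rw [hz l (by omega), mul_zero]),
          hz (s - p) (by omega), mul_zero]
    rw [Finset.sum_congr rfl inner]
    rw [← Finset.sum_subset (Finset.range_subset_range.mpr (by omega : s + 1 ≤ monDeg d + 1))]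
    · apply Finset.sum_congr rfl
      intro p _
      rw [coeff_smul]
    · intro p hp hpn
      have hps : s < p := by
        simp only [Finset.mem_range] at hp hpn
        omega
      have hc0 : MvPowerSeries.coeff d (homComp N f p * homComp N g (s - p)) = 0 := by
        apply ((homog_homComp f p).mul (homog_homComp g (s - p))).coeff_eq_zero
        rw [hd, ← Nat.mul_add]
        intro hcon
        have : s = p + (s - p) := Nat.eq_of_mul_eq_mul_left hN hcon
        omega
      rw [hc0, mul_zero]
  · rw [if_neg hd]
    symm
    apply Finset.sum_eq_zero
    intro p hp
    have hc0 : MvPowerSeries.coeff d (homComp N f p * homComp N g (s - p)) = 0 := by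
      apply ((homog_homComp f p).mul (homog_homComp g (s - p))).coeff_eq_zero
      rw [← Nat.mul_add]
      intro hcon
      apply hd
      rw [hcon]
      congr 1
      have := Finset.mem_range.mp hp
      omega
    rw [coeff_smul, hc0, mul_zero]

noncomputable def Tg (N : ℕ) (f : MvPowerSeries σ ℚ) : PowerSeries (MvPowerSeries σ ℚ) :=
  PowerSeries.mk (homComp N f)

lemma coeff_Tg (f : MvPowerSeries σ ℚ) (s : ℕ) :
    PowerSeries.coeff s (Tg N f) = homComp N f s :=
  PowerSeries.coeff_mk s _

lemma Tg_mul (hN : 1 ≤ N) {f : MvPowerSeries σ ℚ} (hf : InTheta N f)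
    (g : MvPowerSeries σ ℚ) : Tg N (f * g) = Tg N f * Tg N g := by
  apply PowerSeries.ext; intro s
  rw [coeff_Tg, PowerSeries.coeff_mul, homComp_mul hN hf g s,
    Finset.Nat.sum_antidiagonal_eq_sum_range_succ_mk]
  apply Finset.sum_congr rfl
  intro p _
  rw [coeff_Tg, coeff_Tg]

lemma Tg_sub (f g : MvPowerSeries σ ℚ) : Tg N (f - g) = Tg N f - Tg N g := by
  apply PowerSeries.ext; intro s
  rw [map_sub, coeff_Tg, coeff_Tg, coeff_Tg, homComp_sub]

lemma Tg_homog (hN : 1 ≤ N) {j : ℕ} {A : MvPowerSeries σ ℚ} (hA : Homog (N * j) A) :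
    Tg N A = PowerSeries.C A * PowerSeries.X ^ j := by
  apply PowerSeries.ext; intro s
  rw [coeff_Tg, PowerSeries.coeff_C_mul, PowerSeries.coeff_X_pow]
  by_cases h : s = j
  · subst h
    rw [if_pos rfl, mul_one, homComp_of_homog hA rfl]
  · rw [if_neg h, mul_zero, homComp_of_homog_ne hA]
    intro hcon
    exact h (Nat.eq_of_mul_eq_mul_left hN hcon).symm

lemma Tg_one (hN : 1 ≤ N) : Tg N (1 : MvPowerSeries σ ℚ) = 1 := by
  have := Tg_homog hN (j := 0) (A := (1 : MvPowerSeries σ ℚ)) (by simpa using homog_one)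
  simpa using this

lemma Tg_one_sub (hN : 1 ≤ N) {u : MvPowerSeries σ ℚ} (hu : Homog N u) :
    Tg N (1 - u) = 1 - PowerSeries.C u * PowerSeries.X := by
  rw [Tg_sub, Tg_one hN, Tg_homog hN (j := 1) (by simpa using hu), pow_one]

lemma Tg_prod {ι : Type*} (hN : 1 ≤ N) (t : Finset ι) (f : ι → MvPowerSeries σ ℚ)
    (hf : ∀ i ∈ t, InTheta N (f i)) :
    Tg N (∏ i ∈ t, f i) = ∏ i ∈ t, Tg N (f i) := by
  induction t using Finset.cons_induction with
  | empty => simpa using Tg_one hN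
  | cons i t his ih =>
      rw [Finset.prod_cons, Finset.prod_cons,
        Tg_mul hN (hf i (Finset.mem_cons_self i t)),
        ih fun j hj => hf j (Finset.mem_cons_of_mem hj)]

lemma Tg_pow_one_sub (hN : 1 ≤ N) {v : MvPowerSeries σ ℚ} (hv : Homog N v)
    (hth : InTheta N (1 - v)) (j : ℕ) :
    Tg N ((1 - v) ^ j) =
      (1 - PowerSeries.C v * PowerSeries.X) ^ j := by
  induction j with
  | zero => simpa using Tg_one hN
  | succ j ih =>
      rw [pow_succ, pow_succ, Tg_mul hN (theta_pow hth j), ih, Tg_one_sub hN hv]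

noncomputable def Bv (v : R) (F : PowerSeries R) : PowerSeries R :=
  PowerSeries.mk fun s => ∑ p ∈ Finset.range (s + 1),
    (s.choose p : ℚ) • (PowerSeries.coeff p F * v ^ (s - p))

lemma coeff_Bv (v : R) (F : PowerSeries R) (s : ℕ) :
    PowerSeries.coeff s (Bv v F) = ∑ p ∈ Finset.range (s + 1),
      (s.choose p : ℚ) • (PowerSeries.coeff p F * v ^ (s - p)) := by
  rw [Bv, PowerSeries.coeff_mk]

lemma Bv_add (v : R) (F G : PowerSeries R) : Bv v (F + G) = Bv v F + Bv v G := by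
  apply PowerSeries.ext; intro s
  rw [map_add, coeff_Bv, coeff_Bv, coeff_Bv, ← Finset.sum_add_distrib]
  apply Finset.sum_congr rfl
  intro p _
  rw [map_add, add_mul, smul_add]

lemma Bv_sub (v : R) (F G : PowerSeries R) : Bv v (F - G) = Bv v F - Bv v G := by
  apply PowerSeries.ext; intro s
  rw [map_sub, coeff_Bv, coeff_Bv, coeff_Bv, ← Finset.sum_sub_distrib]
  apply Finset.sum_congr rfl
  intro p _
  rw [map_sub, sub_mul, smul_sub]

lemma Bv_C_mul (v r : R) (F : PowerSeries R) :
    Bv v (PowerSeries.C r * F) = PowerSeries.C r * Bv v F := by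
  apply PowerSeries.ext; intro s
  rw [PowerSeries.coeff_C_mul, coeff_Bv, coeff_Bv, Finset.mul_sum]
  apply Finset.sum_congr rfl
  intro p _
  rw [PowerSeries.coeff_C_mul, mul_smul_comm, mul_assoc]

/-- Pascal's rule for `Bv`. -/
lemma Bv_X_mul (v : R) (F : PowerSeries R) :
    (1 - PowerSeries.C v * PowerSeries.X) * Bv v (PowerSeries.X * F) =
      PowerSeries.X * Bv v F := by
  apply PowerSeries.ext; intro s
  rw [sub_mul, one_mul, map_sub]
  rcases s with _ | s
  · rw [PowerSeries.coeff_zero_X_mul]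
    have h0 : PowerSeries.coeff 0 (Bv v (PowerSeries.X * F)) = 0 := by
      rw [coeff_Bv]
      simp [PowerSeries.coeff_zero_X_mul]
    rw [h0]
    have : PowerSeries.C v * PowerSeries.X = PowerSeries.X * PowerSeries.C v := by ring
    rw [this, mul_assoc, PowerSeries.coeff_zero_X_mul, sub_zero]
  · rw [PowerSeries.coeff_succ_X_mul, coeff_Bv]
    have hCX : PowerSeries.C v * PowerSeries.X * Bv v (PowerSeries.X * F) =
        PowerSeries.C v * (PowerSeries.X * Bv v (PowerSeries.X * F)) := by ring
    rw [hCX, PowerSeries.coeff_C_mul, PowerSeries.coeff_succ_X_mul, coeff_Bv, coeff_Bv]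
    -- LHS sum over range (s+2), with (X*F) coefficients
    rw [Finset.sum_range_succ' (fun p => ((s+1).choose p : ℚ) •
      (PowerSeries.coeff p (PowerSeries.X * F) * v ^ (s + 1 - p)))]
    rw [Finset.sum_range_succ' (fun p => (s.choose p : ℚ) •
      (PowerSeries.coeff p (PowerSeries.X * F) * v ^ (s - p)))]
    simp only [PowerSeries.coeff_succ_X_mul, PowerSeries.coeff_zero_X_mul, zero_mul,
      smul_zero, add_zero]
    rw [Finset.mul_sum]
    have hv : ∀ p ∈ Finset.range s, v * ((s.choose (p+1) : ℚ) •
        (PowerSeries.coeff p F * v ^ (s - (p+1)))) =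
        (s.choose (p+1) : ℚ) • (PowerSeries.coeff p F * v ^ (s - p)) := by
      intro p hp
      rw [mul_smul_comm]
      congr 1
      have : s - p = (s - (p+1)) + 1 := by
        have := Finset.mem_range.mp hp; omega
      rw [this, pow_succ]
      ring
    rw [Finset.sum_congr rfl hv]
    simp only [Nat.succ_sub_succ_eq_sub]
    -- now: Σ_{p<s+1} C(s+1,p+1)•(F_p v^{s-p}) - Σ_{p<s} C(s,p+1)•(F_p v^{s-p}) = Σ_{p<s+1} C(s,p)•(F_p v^{s-p})
    rw [Finset.sum_range_succ (fun p => ((s+1).choose (p+1) : ℚ) •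
      (PowerSeries.coeff p F * v ^ (s - p)))]
    rw [Finset.sum_range_succ (fun p => (s.choose p : ℚ) •
      (PowerSeries.coeff p F * v ^ (s - p)))]
    have hlast : (((s+1).choose (s+1) : ℚ)) = ((s.choose s : ℚ)) := by
      rw [Nat.choose_self, Nat.choose_self]
    rw [add_sub_right_comm]
    congr 1
    · rw [← Finset.sum_sub_distrib]
      apply Finset.sum_congr rfl
      intro p hp
      rw [← sub_smul]
      congr 1
      have : (s+1).choose (p+1) = s.choose p + s.choose (p+1) := Nat.choose_succ_succ s p
      rw [this]
      push_cast
      ring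
    · rw [hlast]

lemma Bv_one (v : R) :
    (1 - PowerSeries.C v * PowerSeries.X) * Bv v 1 = 1 := by
  have hB : Bv v 1 = PowerSeries.mk fun s => v ^ s := by
    apply PowerSeries.ext; intro s
    rw [coeff_Bv, PowerSeries.coeff_mk]
    rw [Finset.sum_eq_single 0]
    · simp
    · intro p hp hne
      rw [PowerSeries.coeff_one, if_neg hne]
      simp
    · intro h; simp at h
  rw [hB]
  apply PowerSeries.ext; intro s
  rw [sub_mul, one_mul, map_sub]
  rcases s with _ | s
  · have : PowerSeries.C v * PowerSeries.X * PowerSeries.mk (fun s => v ^ s) =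
        PowerSeries.C v * (PowerSeries.X * PowerSeries.mk fun s => v ^ s) := by ring
    rw [this, PowerSeries.coeff_C_mul, PowerSeries.coeff_zero_X_mul]
    simp
  · have : PowerSeries.C v * PowerSeries.X * PowerSeries.mk (fun s => v ^ s) =
        PowerSeries.C v * (PowerSeries.X * PowerSeries.mk fun s => v ^ s) := by ring
    rw [this, PowerSeries.coeff_C_mul, PowerSeries.coeff_succ_X_mul,
      PowerSeries.coeff_mk, PowerSeries.coeff_mk, PowerSeries.coeff_one]
    rw [if_neg (Nat.succ_ne_zero s), ← pow_succ']
    simp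

lemma Bv_one_sub_mul (v u : R) (F : PowerSeries R) :
    (1 - PowerSeries.C v * PowerSeries.X) *
        Bv v ((1 - PowerSeries.C u * PowerSeries.X) * F) =
      (1 - PowerSeries.C (u + v) * PowerSeries.X) * Bv v F := by
  have expand : (1 - PowerSeries.C u * PowerSeries.X) * F =
      F - PowerSeries.C u * (PowerSeries.X * F) := by ring
  rw [expand, Bv_sub, Bv_C_mul, mul_sub]
  have h1 : (1 - PowerSeries.C v * PowerSeries.X) *
      (PowerSeries.C u * Bv v (PowerSeries.X * F)) =
      PowerSeries.C u * ((1 - PowerSeries.C v * PowerSeries.X) *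
        Bv v (PowerSeries.X * F)) := by ring
  rw [h1, Bv_X_mul, map_add]
  ring

lemma Bv_prod_one_sub_mul {ι : Type*} (v : R) (t : Finset ι) (u : ι → R) (F : PowerSeries R) :
    (1 - PowerSeries.C v * PowerSeries.X) ^ t.card *
        Bv v ((∏ i ∈ t, (1 - PowerSeries.C (u i) * PowerSeries.X)) * F) =
      (∏ i ∈ t, (1 - PowerSeries.C (u i + v) * PowerSeries.X)) * Bv v F := by
  induction t using Finset.cons_induction with
  | empty => simp
  | cons i t his ih =>
      rw [Finset.prod_cons, Finset.prod_cons, Finset.card_cons, pow_succ]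
      have h1 : (1 - PowerSeries.C v * PowerSeries.X) ^ t.card *
          (1 - PowerSeries.C v * PowerSeries.X) *
          Bv v ((1 - PowerSeries.C (u i) * PowerSeries.X) *
            ((∏ j ∈ t, (1 - PowerSeries.C (u j) * PowerSeries.X)) * F)) =
          (1 - PowerSeries.C v * PowerSeries.X) ^ t.card *
          ((1 - PowerSeries.C v * PowerSeries.X) *
          Bv v ((1 - PowerSeries.C (u i) * PowerSeries.X) *
            ((∏ j ∈ t, (1 - PowerSeries.C (u j) * PowerSeries.X)) * F))) := by ring
      rw [mul_assoc (1 - PowerSeries.C (u i) * PowerSeries.X), h1, Bv_one_sub_mul]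
      have h2 : (1 - PowerSeries.C v * PowerSeries.X) ^ t.card *
          ((1 - PowerSeries.C (u i + v) * PowerSeries.X) *
            Bv v ((∏ j ∈ t, (1 - PowerSeries.C (u j) * PowerSeries.X)) * F)) =
          (1 - PowerSeries.C (u i + v) * PowerSeries.X) *
          ((1 - PowerSeries.C v * PowerSeries.X) ^ t.card *
            Bv v ((∏ j ∈ t, (1 - PowerSeries.C (u j) * PowerSeries.X)) * F)) := by ring
      rw [h2, ih]
      ring

lemma Bv_X_pow (v : R) (k : ℕ) :
    (1 - PowerSeries.C v * PowerSeries.X) ^ (k + 1) * Bv v (PowerSeries.X ^ k) =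
      PowerSeries.X ^ k := by
  induction k with
  | zero => simpa using Bv_one v
  | succ k ih =>
      have hX : (PowerSeries.X : PowerSeries R) ^ (k+1) = PowerSeries.X * PowerSeries.X ^ k := by
        rw [pow_succ']
      rw [hX]
      have h1 : (1 - PowerSeries.C v * PowerSeries.X) ^ (k + 1 + 1) *
          Bv v (PowerSeries.X * PowerSeries.X ^ k) =
          (1 - PowerSeries.C v * PowerSeries.X) ^ (k + 1) *
          ((1 - PowerSeries.C v * PowerSeries.X) *
            Bv v (PowerSeries.X * PowerSeries.X ^ k)) := by ring
      rw [h1, Bv_X_mul]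
      have h2 : (1 - PowerSeries.C v * PowerSeries.X) ^ (k + 1) *
          (PowerSeries.X * Bv v (PowerSeries.X ^ k)) =
          PowerSeries.X * ((1 - PowerSeries.C v * PowerSeries.X) ^ (k + 1) *
            Bv v (PowerSeries.X ^ k)) := by ring
      rw [h2, ih]

lemma Tg_odot_inv (hN : 1 ≤ N) (f : MvPowerSeries σ ℚ) {v : MvPowerSeries σ ℚ}
    (hv : Homog N v) : Tg N (odot N f ((1 - v)⁻¹)) = Bv v (Tg N f) := by
  apply PowerSeries.ext; intro s
  rw [coeff_Tg, coeff_Bv, homComp_odot hN f _ s]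
  apply Finset.sum_congr rfl
  intro p _
  rw [coeff_Tg, homComp_inv_one_sub hN hv]

end Aux

open Aux PowerSeries

/-- Proposition `11v`:
`(a_1⋯a_k ∏_i (1-u_i)⁻¹) ⊙ (1-v)⁻¹ = a_1⋯a_k (1-v)^{m-k-1} ∏_i (1-u_i-v)⁻¹`. -/
theorem odot_prod_inv_one_sub_inv {σ : Type*} (N : ℕ) (hN : 1 ≤ N)
    (m : ℕ) (hm : 1 ≤ m) (k : ℕ) (hk : k < m)
    (a : Fin k → MvPowerSeries σ ℚ) (u : Fin m → MvPowerSeries σ ℚ)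
    (v : MvPowerSeries σ ℚ)
    (ha : ∀ i, IsHomogDeg N (a i)) (hu : ∀ i, IsHomogDeg N (u i)) (hv : IsHomogDeg N v)
    (huinj : Function.Injective u) :
    odot N ((∏ i, a i) * ∏ i, (1 - u i)⁻¹) ((1 - v)⁻¹) =
      (∏ i, a i) * (1 - v) ^ (m - k - 1) * ∏ i, (1 - u i - v)⁻¹ := by
  classical
  simp only [sub_sub]
  set A : MvPowerSeries σ ℚ := ∏ i, a i with hAdef
  set f : MvPowerSeries σ ℚ := A * ∏ i, (1 - u i)⁻¹ with hfdef
  set RHS : MvPowerSeries σ ℚ := A * (1 - v) ^ (m - k - 1) * ∏ i, (1 - (u i + v))⁻¹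
    with hRHSdef
  have hNpos : N ≠ 0 := by omega
  have hai : ∀ i, Homog N (a i) := fun i => (ha i).2
  have hui : ∀ i, Homog N (u i) := fun i => (hu i).2
  have hvh : Homog N v := hv.2
  have huv : ∀ i, Homog N (u i + v) := fun i => homog_add (hui i) hvh
  have hA : Homog (N * k) A := by
    have h1 := homog_prod Finset.univ a (fun _ => N) (fun i _ => hai i)
    have h2 : (∑ _i : Fin k, N) = N * k := by
      rw [Finset.sum_const, Finset.card_univ, Fintype.card_fin, smul_eq_mul, mul_comm]
    rwa [h2] at h1
  -- constant coefficients
  have hcu : ∀ i, MvPowerSeries.constantCoeff (1 - u i) ≠ 0 := by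
    intro i
    rw [map_sub, map_one, (hui i).constantCoeff_eq_zero hNpos, sub_zero]
    exact one_ne_zero
  have hcv : MvPowerSeries.constantCoeff (1 - v) ≠ 0 := by
    rw [map_sub, map_one, hvh.constantCoeff_eq_zero hNpos, sub_zero]
    exact one_ne_zero
  have hcuv : ∀ i, MvPowerSeries.constantCoeff (1 - (u i + v)) ≠ 0 := by
    intro i
    rw [map_sub, map_one, (huv i).constantCoeff_eq_zero hNpos, sub_zero]
    exact one_ne_zero
  -- Theta memberships
  have thA : InTheta N A := hA.theta ⟨k, rfl⟩
  have thui : ∀ i, InTheta N (1 - u i) :=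
    fun i => theta_sub theta_one ((hui i).theta (dvd_refl N))
  have thuinv : ∀ i, InTheta N ((1 - u i)⁻¹) := fun i => theta_inv (thui i) (hcu i)
  have thf : InTheta N f :=
    theta_mul thA (theta_prod Finset.univ _ (fun i _ => thuinv i))
  have thv : InTheta N (1 - v) := theta_sub theta_one (hvh.theta (dvd_refl N))
  have thuv : ∀ i, InTheta N (1 - (u i + v)) :=
    fun i => theta_sub theta_one ((huv i).theta (dvd_refl N))
  have thuvinv : ∀ i, InTheta N ((1 - (u i + v))⁻¹) :=
    fun i => theta_inv (thuv i) (hcuv i)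
  have thRHS : InTheta N RHS :=
    theta_mul (theta_mul thA (theta_pow thv _))
      (theta_prod Finset.univ _ (fun i _ => thuvinv i))
  have thLHS : InTheta N (odot N f ((1 - v)⁻¹)) := theta_odot f _
  -- the product relation for f
  have hfprod : f * ∏ i, (1 - u i) = A := by
    rw [hfdef, mul_assoc, ← Finset.prod_mul_distrib]
    rw [Finset.prod_congr rfl
      (fun i _ => MvPowerSeries.inv_mul_cancel (1 - u i) (hcu i)),
      Finset.prod_const_one, mul_one]
  -- Tg of f relation
  have hTf : Tg N f * ∏ i, (1 - C (u i) * X) =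
      C A * X ^ k := by
    calc Tg N f * ∏ i, (1 - C (u i) * X)
        = Tg N f * ∏ i, Tg N (1 - u i) := by
          rw [Finset.prod_congr rfl (fun i _ => (Tg_one_sub hN (hui i)).symm)]
      _ = Tg N (f * ∏ i, (1 - u i)) := by
          rw [Tg_mul hN thf, Tg_prod hN Finset.univ _ (fun i _ => thui i)]
      _ = Tg N A := by rw [hfprod]
      _ = C A * X ^ k := Tg_homog hN hA
  set Y : PowerSeries (MvPowerSeries σ ℚ) := 1 - C v * X with hYdef
  -- LHS chain
  have h1 := Bv_prod_one_sub_mul v Finset.univ u (Tg N f)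
  rw [Finset.card_univ, Fintype.card_fin] at h1
  have h2 : (∏ i, (1 - C (u i) * X)) * Tg N f =
      C A * X ^ k := by rw [mul_comm]; exact hTf
  rw [h2, Bv_C_mul] at h1
  have hWL : Y ^ (k + 1) * ((∏ i, (1 - C (u i + v) * X)) *
      Bv v (Tg N f)) = Y ^ m * (C A * X ^ k) := by
    rw [← h1]
    calc Y ^ (k+1) * (Y ^ m * (C A * Bv v (X ^ k)))
        = Y ^ m * (C A * (Y ^ (k+1) * Bv v (X ^ k))) := by ring
      _ = Y ^ m * (C A * X ^ k) := by rw [Bv_X_pow]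
  -- RHS chain
  have hRHSprod : RHS * ∏ i, (1 - (u i + v)) = A * (1 - v) ^ (m - k - 1) := by
    rw [hRHSdef, mul_assoc, ← Finset.prod_mul_distrib]
    rw [Finset.prod_congr rfl
      (fun i _ => MvPowerSeries.inv_mul_cancel (1 - (u i + v)) (hcuv i)),
      Finset.prod_const_one, mul_one]
  have hTRHS : Tg N RHS * ∏ i, (1 - C (u i + v) * X) =
      C A * X ^ k * Y ^ (m - k - 1) := by
    calc Tg N RHS * ∏ i, (1 - C (u i + v) * X)
        = Tg N RHS * ∏ i, Tg N (1 - (u i + v)) := by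
          rw [Finset.prod_congr rfl (fun i _ => (Tg_one_sub hN (huv i)).symm)]
      _ = Tg N (RHS * ∏ i, (1 - (u i + v))) := by
          rw [Tg_mul hN thRHS, Tg_prod hN Finset.univ _ (fun i _ => thuv i)]
      _ = Tg N (A * (1 - v) ^ (m - k - 1)) := by rw [hRHSprod]
      _ = Tg N A * Tg N ((1 - v) ^ (m - k - 1)) := Tg_mul hN thA _
      _ = C A * X ^ k * Y ^ (m - k - 1) := by
          rw [Tg_homog hN hA, Tg_pow_one_sub hN hvh thv]
  have hWR : Y ^ (k + 1) * (Tg N RHS *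
      ∏ i, (1 - C (u i + v) * X)) =
      Y ^ m * (C A * X ^ k) := by
    rw [hTRHS]
    have hexp : (k + 1) + (m - k - 1) = m := by omega
    calc Y ^ (k+1) * (C A * X ^ k * Y ^ (m - k - 1))
        = Y ^ ((k+1) + (m - k - 1)) * (C A * X ^ k) := by
          rw [pow_add]; ring
      _ = Y ^ m * (C A * X ^ k) := by rw [hexp]
  -- cancellation
  set W : PowerSeries (MvPowerSeries σ ℚ) :=
    Y ^ (k + 1) * ∏ i, (1 - C (u i + v) * X) with hWdef
  have hWunit : IsUnit W := by
    rw [PowerSeries.isUnit_iff_constantCoeff]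
    have : constantCoeff W = 1 := by
      rw [hWdef, map_mul, map_pow, map_prod]
      have hY : constantCoeff Y = 1 := by
        rw [hYdef, map_sub, map_one, map_mul, constantCoeff_X, mul_zero, sub_zero]
      have hfac : ∀ i : Fin m, constantCoeff
          (1 - C (u i + v) * X) = 1 := by
        intro i
        rw [map_sub, map_one, map_mul, constantCoeff_X, mul_zero, sub_zero]
      rw [hY, Finset.prod_congr rfl (fun i _ => hfac i), Finset.prod_const_one, one_pow,
        mul_one]
    rw [this]
    exact isUnit_one
  have hTeq : Tg N (odot N f ((1 - v)⁻¹)) = Tg N RHS := by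
    apply hWunit.mul_right_cancel
    rw [hWdef]
    calc Tg N (odot N f ((1 - v)⁻¹)) *
          (Y ^ (k + 1) * ∏ i, (1 - C (u i + v) * X))
        = Y ^ (k + 1) * ((∏ i, (1 - C (u i + v) * X)) *
            Bv v (Tg N f)) := by rw [Tg_odot_inv hN f hvh]; ring
      _ = Y ^ m * (C A * X ^ k) := hWL
      _ = Y ^ (k + 1) * (Tg N RHS *
            ∏ i, (1 - C (u i + v) * X)) := hWR.symm
      _ = Tg N RHS * (Y ^ (k + 1) *
            ∏ i, (1 - C (u i + v) * X)) := by ring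
  apply theta_ext thLHS thRHS
  intro s
  have := congrArg (PowerSeries.coeff s) hTeq
  rwa [coeff_Tg, coeff_Tg] at this
end
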